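/- Let D(u,v,t,m) over F_q be defined via block Vandermonde parity-check rows in primitive m-th roots of unity ζ_i (block rows with exponents 1,…,u; global rows with exponents u+1,…,u+v), where m | q-1. If 2u + v ≤ m - 1, then D(u,0,t,m)^{⊥_E} ⊆ D(u,v,t,m). -/

import Mathlib

open Matrix


/-- The parity-check matrix of the code D(u,v,t,m) over F_q. -/
def parityD (m u v t : ℕ) {F : Type*} [Field F] (ζ : Fin t → F) :
    Matrix ((Fin t × Fin u) ⊕ Fin v) (Fin t × Fin m) F :=
  fun r c =>
    match r with
    | Sum.inl (i, j) => if c.1 = i then ζ i ^ ((j.val + 1) * c.2.val) else 0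
    | Sum.inr j => ζ c.1 ^ ((u + j.val + 1) * c.2.val)

lemma geom_zero {F : Type*} [Field F] (ζ : F) (m k : ℕ) (hord : orderOf ζ = m)
    (hk : 0 < k) (hkm : k < m) : ∑ b : Fin m, ζ ^ (k * b.val) = 0 := by
  have hζk : ζ ^ k ≠ 1 := by
    intro h
    have hd := orderOf_dvd_of_pow_eq_one h
    rw [hord] at hd
    exact absurd (Nat.le_of_dvd hk hd) (not_le.2 hkm)
  have h1 : ∑ b : Fin m, ζ ^ (k * b.val) = ∑ b ∈ Finset.range m, (ζ ^ k) ^ b := by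
    rw [Fin.sum_univ_eq_sum_range (fun b => ζ ^ (k * b))]
    simp [pow_mul]
  have h2 : (ζ ^ k) ^ m = 1 := by
    rw [← pow_mul, mul_comm, pow_mul, ← hord, pow_orderOf_eq_one, one_pow]
  rw [h1, geom_sum_eq hζk, h2]
  simp

lemma prod_eq_zero (m u v t : ℕ) {F : Type*} [Field F] (ζ : Fin t → F)
    (hζ : ∀ i, orderOf (ζ i) = m) (huv : 2 * u + v + 1 ≤ m) :
    parityD m u v t ζ * (parityD m u 0 t ζ)ᵀ = 0 := by
  ext r r'
  rw [Matrix.mul_apply]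
  simp only [Matrix.transpose_apply, Matrix.zero_apply]
  rcases r' with ⟨i', j'⟩ | j'
  · rcases r with ⟨i, j⟩ | j
    · -- both block rows
      rw [Fintype.sum_prod_type]
      by_cases hii : i = i'
      · subst hii
        have : ∀ a : Fin t, ∑ b : Fin m,
            parityD m u v t ζ (Sum.inl (i, j)) (a, b) *
            parityD m u 0 t ζ (Sum.inl (i, j')) (a, b)
            = if a = i then ∑ b : Fin m, ζ i ^ ((j.val + j'.val + 2) * b.val) else 0 := by
          intro a
          by_cases ha : a = i
          · subst ha
            simp only [parityD, if_pos rfl, eq_self_iff_true, if_true]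
            refine Finset.sum_congr rfl fun b _ => ?_
            rw [← pow_add, ← add_mul]
            congr 1
            ring
          · simp [parityD, ha]
        rw [Finset.sum_congr rfl fun a _ => this a]
        rw [Finset.sum_ite_eq' _ i _]
        simp only [Finset.mem_univ, if_pos]
        exact geom_zero (ζ i) m _ (hζ i) (by omega) (by omega)
      · refine Finset.sum_eq_zero fun a _ => Finset.sum_eq_zero fun b _ => ?_
        simp only [parityD]
        by_cases ha : a = i
        · have : ¬ a = i' := by rw [ha]; exact hii
          simp [this]
        · simp [ha]
    · -- global row times block row
      rw [Fintype.sum_prod_type]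
      have : ∀ a : Fin t, ∑ b : Fin m,
          parityD m u v t ζ (Sum.inr j) (a, b) *
          parityD m u 0 t ζ (Sum.inl (i', j')) (a, b)
          = if a = i' then ∑ b : Fin m, ζ i' ^ ((u + j.val + j'.val + 2) * b.val) else 0 := by
        intro a
        by_cases ha : a = i'
        · subst ha
          simp only [parityD, if_pos rfl, eq_self_iff_true, if_true]
          refine Finset.sum_congr rfl fun b _ => ?_
          rw [← pow_add, ← add_mul]
          congr 1
          ring
        · simp [parityD, ha]
      rw [Finset.sum_congr rfl fun a _ => this a]
      rw [Finset.sum_ite_eq' _ i' _]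
      simp only [Finset.mem_univ, if_pos]
      exact geom_zero (ζ i') m _ (hζ i') (by omega) (by omega)
  · exact absurd j'.2 (by omega)

/-- if 2u + v ≤ m - 1, then the Euclidean dual of D(u,0,t,m) is
contained in D(u,v,t,m). -/
theorem stmt_12 (p e q m u v t : ℕ) (hp : p.Prime) (he : 0 < e) (hq : q = p ^ e)
    (hq5 : 5 ≤ q) (hm : m ∣ q - 1) (hu : 1 ≤ u) (ht : 1 ≤ t) (hvu : v ≤ u)
    (huv : 2 * u + v ≤ m - 1)
    {F : Type*} [Field F] [Fintype F] [DecidableEq F]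
    (hF : Fintype.card F = q)
    (ζ : Fin t → F) (hζ : ∀ i, orderOf (ζ i) = m) :
    ∀ x : Fin t × Fin m → F,
      (∀ y ∈ LinearMap.ker (parityD m u 0 t ζ).mulVecLin, ∑ c, x c * y c = 0) →
      x ∈ LinearMap.ker (parityD m u v t ζ).mulVecLin := by
  intro x hx
  have hm1 : 2 * u + v + 1 ≤ m := by
    rcases Nat.eq_zero_or_pos m with h0 | h0
    · omega
    · omega
  -- the dot product bilinear form
  set B : LinearMap.BilinForm F (Fin t × Fin m → F) :=
    LinearMap.mk₂ F dotProduct add_dotProduct smul_dotProduct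
      dotProduct_add dotProduct_smul with hB
  have hBapp : ∀ a b, B a b = dotProduct a b := fun a b => rfl
  have hBnd : B.Nondegenerate := by
    refine ⟨fun a ha => dotProduct_eq_zero a fun w => ha w,
      fun a ha => dotProduct_eq_zero a fun w => (dotProduct_comm a w).trans (ha w)⟩
  have hBrefl : B.IsRefl := by
    intro a b hab
    rw [hBapp] at hab ⊢
    exact (dotProduct_comm b a).trans hab
  set H0 := parityD m u 0 t ζ with hH0
  set W : Submodule F (Fin t × Fin m → F) := LinearMap.range (H0ᵀ).mulVecLin with hW
  have hker : B.orthogonal W = LinearMap.ker H0.mulVecLin := by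
    ext y
    constructor
    · intro hy
      rw [LinearMap.mem_ker]
      apply dotProduct_eq_zero
      intro w
      have := hy (H0ᵀ.mulVec w) ⟨w, rfl⟩
      rw [hBapp, Matrix.mulVec_transpose,
        ← dotProduct_mulVec] at this
      rwa [dotProduct_comm]
    · intro hy z hz
      obtain ⟨w, rfl⟩ := hz
      rw [hBapp]
      show dotProduct (H0ᵀ.mulVec w) y = 0
      have hy0 : H0 *ᵥ y = 0 := hy
      rw [Matrix.mulVec_transpose, ← dotProduct_mulVec, hy0, dotProduct_zero]
  have hxW : x ∈ W := by
    rw [← LinearMap.BilinForm.orthogonal_orthogonal hBnd hBrefl W]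
    intro y hy
    rw [hker] at hy
    have hxy := hx y hy
    show B y x = 0
    rw [hBapp, dotProduct_comm]
    exact hxy
  obtain ⟨w, hw⟩ := hxW
  rw [LinearMap.mem_ker]
  show (parityD m u v t ζ).mulVec x = 0
  have hw' : x = H0ᵀ.mulVec w := hw.symm
  rw [hw', Matrix.mulVec_mulVec, prod_eq_zero m u v t ζ hζ hm1, Matrix.zero_mulVec]
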